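/- (Smallness of near-antiparallel ℓ-coefficients under the modulational Ansatz.) Let k₀ > 0 and χ₁, χ₂ ∈ ℝ² be fixed, and set k₁(ε) = (k₀,0) + ε χ₁ and k₂(ε) = (k₀,0) + ε χ₂. Then the function ε ↦ ℓ_{k₁(ε)+k₂(ε)}^{−k₁(ε)} = ( ‖k₁+k₂‖·‖k₁‖ − (k₁+k₂)·k₁ ) / √(‖k₁+k₂‖·‖k₁‖) is O(ε²) as ε → 0. -/

import Mathlib

open Asymptotics Filter Topology

/-- Euclidean norm on ℝ². -/
noncomputable def norm2 (k : ℝ × ℝ) : ℝ := Real.sqrt (k.1 ^ 2 + k.2 ^ 2)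

/-- Euclidean inner product on ℝ². -/
def dot (a b : ℝ × ℝ) : ℝ := a.1 * b.1 + a.2 * b.2

/-- Smallness of near-antiparallel ℓ-coefficients under the modulational Ansatz:
    ℓ_{k₁+k₂}^{−k₁} = O(ε²) as ε → 0, where kⱼ = (k₀,0) + ε χⱼ. -/
theorem ell_antiparallel_small (k₀ : ℝ) (hk₀ : 0 < k₀) (χ₁ χ₂ : ℝ × ℝ) :
    (fun ε : ℝ =>
        (norm2 (((k₀, 0) + ε • χ₁) + ((k₀, 0) + ε • χ₂)) * norm2 ((k₀, 0) + ε • χ₁)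
            - dot (((k₀, 0) + ε • χ₁) + ((k₀, 0) + ε • χ₂)) ((k₀, 0) + ε • χ₁)) /
          Real.sqrt (norm2 (((k₀, 0) + ε • χ₁) + ((k₀, 0) + ε • χ₂)) *
            norm2 ((k₀, 0) + ε • χ₁)))
      =O[𝓝 (0 : ℝ)] fun ε => ε ^ 2 := by
  -- scalar components
  set a1 : ℝ → ℝ := fun ε => (k₀ + ε * χ₁.1) + (k₀ + ε * χ₂.1) with ha1
  set a2 : ℝ → ℝ := fun ε => (0 + ε * χ₁.2) + (0 + ε * χ₂.2) with ha2
  set b1 : ℝ → ℝ := fun ε => k₀ + ε * χ₁.1 with hb1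
  set b2 : ℝ → ℝ := fun ε => 0 + ε * χ₁.2 with hb2
  set nA : ℝ → ℝ := fun ε => Real.sqrt (a1 ε ^ 2 + a2 ε ^ 2) with hnA
  set nB : ℝ → ℝ := fun ε => Real.sqrt (b1 ε ^ 2 + b2 ε ^ 2) with hnB
  set S : ℝ → ℝ := fun ε => nA ε * nB ε + (a1 ε * b1 ε + a2 ε * b2 ε) with hS
  set c : ℝ → ℝ := fun ε => a1 ε * χ₁.2 - (χ₁.2 + χ₂.2) * b1 ε with hc
  set G : ℝ → ℝ := fun ε => c ε ^ 2 / (S ε * Real.sqrt (nA ε * nB ε)) with hG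
  have hnAc : Continuous nA := by fun_prop
  have hnBc : Continuous nB := by fun_prop
  have hSc : Continuous S := by fun_prop
  -- values at 0
  have hnA0 : nA 0 = 2 * k₀ := by
    simp only [hnA, ha1, ha2]
    norm_num
    rw [show k₀ + k₀ = 2 * k₀ by ring, Real.sqrt_eq_iff_eq_sq] <;> nlinarith
  have hnB0 : nB 0 = k₀ := by
    simp only [hnB, hb1, hb2]
    norm_num
    rw [Real.sqrt_eq_iff_eq_sq] <;> nlinarith
  have hS0 : S 0 = 4 * k₀ ^ 2 := by
    simp only [hS, hnA0, hnB0, ha1, ha2, hb1, hb2]; norm_num; ring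
  -- eventual positivity
  have hSpos : ∀ᶠ ε in 𝓝 (0:ℝ), 0 < S ε := by
    have : Tendsto S (𝓝 0) (𝓝 (S 0)) := hSc.continuousAt
    rw [hS0] at this
    exact this.eventually_const_lt (by positivity)
  have hPpos : ∀ᶠ ε in 𝓝 (0:ℝ), 0 < nA ε * nB ε := by
    have : Tendsto (fun ε => nA ε * nB ε) (𝓝 0) (𝓝 (nA 0 * nB 0)) :=
      (hnAc.mul hnBc).continuousAt
    rw [hnA0, hnB0] at this
    exact this.eventually_const_lt (by positivity)
  -- eventual equality with ε^2 * G ε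
  have heq : (fun ε : ℝ =>
        (norm2 (((k₀, 0) + ε • χ₁) + ((k₀, 0) + ε • χ₂)) * norm2 ((k₀, 0) + ε • χ₁)
            - dot (((k₀, 0) + ε • χ₁) + ((k₀, 0) + ε • χ₂)) ((k₀, 0) + ε • χ₁)) /
          Real.sqrt (norm2 (((k₀, 0) + ε • χ₁) + ((k₀, 0) + ε • χ₂)) *
            norm2 ((k₀, 0) + ε • χ₁)))
      =ᶠ[𝓝 (0:ℝ)] fun ε => ε ^ 2 * G ε := by
    filter_upwards [hSpos, hPpos] with ε hSε hPε
    have hform : norm2 (((k₀, 0) + ε • χ₁) + ((k₀, 0) + ε • χ₂)) = nA ε ∧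
        norm2 ((k₀, 0) + ε • χ₁) = nB ε ∧
        dot (((k₀, 0) + ε • χ₁) + ((k₀, 0) + ε • χ₂)) ((k₀, 0) + ε • χ₁)
          = a1 ε * b1 ε + a2 ε * b2 ε := by
      refine ⟨?_, ?_, ?_⟩ <;> simp [norm2, dot, hnA, hnB, ha1, ha2, hb1, hb2, Prod.smul_def]
    obtain ⟨h1, h2, h3⟩ := hform
    rw [h1, h2, h3]
    -- key algebraic identity
    have hsq : (nA ε * nB ε) ^ 2 = (a1 ε ^ 2 + a2 ε ^ 2) * (b1 ε ^ 2 + b2 ε ^ 2) := by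
      rw [mul_pow, hnA, hnB, Real.sq_sqrt (by positivity), Real.sq_sqrt (by positivity)]
    have hcross : a1 ε * b2 ε - a2 ε * b1 ε = ε * c ε := by
      simp only [ha1, ha2, hb1, hb2, hc]; ring
    have hkey : (nA ε * nB ε - (a1 ε * b1 ε + a2 ε * b2 ε)) * S ε = (ε * c ε) ^ 2 := by
      have : (nA ε * nB ε - (a1 ε * b1 ε + a2 ε * b2 ε)) * S ε
          = (nA ε * nB ε) ^ 2 - (a1 ε * b1 ε + a2 ε * b2 ε) ^ 2 := by
        simp only [hS]; ring
      rw [this, hsq, ← hcross]; ring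
    have hnum : nA ε * nB ε - (a1 ε * b1 ε + a2 ε * b2 ε) = ε ^ 2 * c ε ^ 2 / S ε := by
      rw [eq_div_iff hSε.ne', hkey]; ring
    rw [hnum, hG]
    rw [div_div, mul_div_assoc]
  refine IsBigO.congr' ?_ heq.symm (EventuallyEq.refl _ _)
  have hGten : Tendsto G (𝓝 0) (𝓝 (G 0)) := by
    apply ContinuousAt.tendsto
    apply ContinuousAt.div
    · fun_prop
    · fun_prop
    · have : 0 < S 0 * Real.sqrt (nA 0 * nB 0) := by
        rw [hS0, hnA0, hnB0]; positivity
      exact ne_of_gt this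
  calc (fun ε : ℝ => ε ^ 2 * G ε)
      =O[𝓝 (0:ℝ)] fun ε : ℝ => ε ^ 2 * 1 :=
        (isBigO_refl (fun ε : ℝ => ε ^ 2) _).mul (hGten.isBigO_one ℝ)
    _ = fun ε : ℝ => ε ^ 2 := by funext ε; ring
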